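/- Let (X,d) be a Heine–Borel metric space, p ≥ 1, μ ∈ P_p(X), k ∈ ℕ, and R ⊆ X closed, with k ≤ #(R ∩ supp(μ)). Then (μ,k,R) is non-singular: the optimal values satisfy m_{1,p}(μ,R) > m_{2,p}(μ,R) > ⋯ > m_{k,p}(μ,R), where m_{j,p}(μ,R) := inf{∫ min_{x∈S} d(x,y)^p dμ(y) : S ⊆ R, 1 ≤ #S ≤ j}. -/

import Mathlib

open Filter MeasureTheory Topology TopologicalSpace Metric Set

noncomputable section

/-- Kuratowski lower limit of a sequence of sets. -/
def KurLi {Y : Type*} [TopologicalSpace Y] (A : ℕ → Set Y) : Set Y :=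
  {x | ∀ U ∈ nhds x, ∀ᶠ n in atTop, (U ∩ A n).Nonempty}

/-- Kuratowski upper limit of a sequence of sets. -/
def KurLs {Y : Type*} [TopologicalSpace Y] (A : ℕ → Set Y) : Set Y :=
  {x | ∀ U ∈ nhds x, ∃ᶠ n in atTop, (U ∩ A n).Nonempty}

variable {X : Type*} [MetricSpace X] [MeasurableSpace X]

/-- The clustering cost `W_p(S,μ) = ∫ d(y,S)^p dμ(y)`. -/
def Wp (p : ℝ) (S : Set X) (μ : Measure X) : ℝ :=
  ∫ y, infDist y S ^ p ∂μ

/-- `μ` has a finite `p`-th moment. -/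
def FinMom (p : ℝ) (μ : Measure X) : Prop :=
  ∃ x : X, Integrable (fun y => dist x y ^ p) μ

/-- Convergence in the `p`-Wasserstein topology: weak convergence together with
convergence of the `p`-th moments about some point. -/
def WassTendsto (p : ℝ) (μ : ℕ → Measure X) (ν : Measure X) : Prop :=
  (∀ f : BoundedContinuousFunction X ℝ,
      Tendsto (fun n => ∫ y, f y ∂ μ n) atTop (𝓝 (∫ y, f y ∂ ν))) ∧
  ∃ x : X, Tendsto (fun n => ∫ y, dist x y ^ p ∂ μ n) atTop (𝓝 (∫ y, dist x y ^ p ∂ ν))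

/-- `S` is a feasible set of cluster centers: a nonempty finite subset of `R`
with at most `k` points. -/
def Feas (k : ℕ) (R S : Set X) : Prop :=
  S ⊆ R ∧ S.Finite ∧ S.Nonempty ∧ S.ncard ≤ k

/-- The optimal clustering cost `m_{k,p}(μ,R)`. -/
def mCost (p : ℝ) (μ : Measure X) (k : ℕ) (R : Set X) : ℝ :=
  sInf ((fun S => Wp p S μ) '' {S | Feas k R S})

/-- The set of optimal cluster-center sets `C_p(μ,k,R)`, viewed as a subset of the
hyperspace of nonempty compact subsets of `X` with the Hausdorff metric. -/
def Cp (p : ℝ) (μ : Measure X) (k : ℕ) (R : Set X) : Set (NonemptyCompacts X) :=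
  {S | Feas k R (S : Set X) ∧ ∀ T : Set X, Feas k R T → Wp p (S : Set X) μ ≤ Wp p T μ}

/-- The support of a measure on a metric space. -/
def measSupp (μ : Measure X) : Set X :=
  {x | ∀ r : ℝ, 0 < r → μ (Metric.ball x r) ≠ 0}

/-- Elementary inequality `(a+b)^p ≤ 2^p (a^p + b^p)`. -/
lemma rpow_add_le_aux {a b p : ℝ} (ha : 0 ≤ a) (hb : 0 ≤ b) (hp : 0 ≤ p) :
    (a + b) ^ p ≤ 2 ^ p * (a ^ p + b ^ p) := by
  calc (a + b) ^ p ≤ (2 * max a b) ^ p := by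
        apply Real.rpow_le_rpow (by linarith) ?_ hp
        rcases max_cases a b with ⟨h, _⟩ | ⟨h, _⟩ <;> rw [h] <;> linarith
    _ = 2 ^ p * max a b ^ p := Real.mul_rpow (by norm_num) (le_max_of_le_left ha)
    _ ≤ 2 ^ p * (a ^ p + b ^ p) := by
        apply mul_le_mul_of_nonneg_left ?_ (Real.rpow_nonneg (by norm_num) p)
        rcases max_cases a b with ⟨h, _⟩ | ⟨h, _⟩ <;> rw [h]
        · linarith [Real.rpow_nonneg hb p]
        · linarith [Real.rpow_nonneg ha p]

/-- A finite set of positive reals has a positive lower bound. -/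
lemma finite_pos_lb {T : Set ℝ} (hT : T.Finite) (h : ∀ t ∈ T, 0 < t) :
    ∃ r > 0, ∀ t ∈ T, r ≤ t := by
  revert h
  refine Set.Finite.induction_on (motive := fun T _ => (∀ t ∈ T, 0 < t) → ∃ r > 0, ∀ t ∈ T, r ≤ t)
    T hT (fun _ => ⟨1, one_pos, by simp⟩) ?_
  rintro a s - - ih h
  obtain ⟨r, hr, hrs⟩ := ih (fun t ht => h t (Set.mem_insert_of_mem a ht))
  refine ⟨min a r, lt_min (h a (Set.mem_insert a s)) hr, ?_⟩
  rintro t (rfl | ht)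
  · exact min_le_left _ _
  · exact (min_le_right _ _).trans (hrs t ht)

/-- Integrability of `p`-th moments about an arbitrary point. -/
lemma integrable_dist_rpow [OpensMeasurableSpace X] {p : ℝ} (hp : 1 ≤ p)
    {μ : Measure X} [IsProbabilityMeasure μ] (hμ : FinMom p μ) (x0 : X) :
    Integrable (fun y => dist x0 y ^ p) μ := by
  obtain ⟨x, hx⟩ := hμ
  have hp0 : (0 : ℝ) ≤ p := by linarith
  have hcont : Continuous fun y => dist x0 y ^ p :=
    (continuous_const.dist continuous_id).rpow_const (fun y => Or.inr hp0)
  refine Integrable.mono' (g := fun y => 2 ^ p * (dist x0 x ^ p + dist x y ^ p))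
    ?_ hcont.aestronglyMeasurable ?_
  · exact ((integrable_const _).add hx).const_mul _
  · filter_upwards with y
    rw [Real.norm_of_nonneg (Real.rpow_nonneg dist_nonneg p)]
    calc dist x0 y ^ p ≤ (dist x0 x + dist x y) ^ p :=
          Real.rpow_le_rpow dist_nonneg (dist_triangle _ _ _) hp0
      _ ≤ 2 ^ p * (dist x0 x ^ p + dist x y ^ p) :=
          rpow_add_le_aux dist_nonneg dist_nonneg hp0

/-- Integrability of the clustering cost integrand. -/
lemma integrable_infDist_rpow [OpensMeasurableSpace X] {p : ℝ} (hp : 1 ≤ p)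
    {μ : Measure X} [IsProbabilityMeasure μ] (hμ : FinMom p μ) {S : Set X} (hS : S.Nonempty) :
    Integrable (fun y => infDist y S ^ p) μ := by
  obtain ⟨s, hs⟩ := hS
  have hp0 : (0 : ℝ) ≤ p := by linarith
  have hcont : Continuous fun y : X => infDist y S ^ p :=
    (continuous_infDist_pt S).rpow_const (fun y => Or.inr hp0)
  refine Integrable.mono' (integrable_dist_rpow hp hμ s) hcont.aestronglyMeasurable ?_
  filter_upwards with y
  rw [Real.norm_of_nonneg (Real.rpow_nonneg infDist_nonneg p)]
  have : infDist y S ≤ dist s y := by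
    rw [dist_comm]; exact infDist_le_dist_of_mem hs
  exact Real.rpow_le_rpow infDist_nonneg this hp0

/-- If `k ≤ #(R ∩ supp μ)`, then `(μ,k,R)` is non-singular: the optimal clustering costs
strictly decrease, `m_{1,p}(μ,R) > m_{2,p}(μ,R) > ⋯ > m_{k,p}(μ,R)`. -/
theorem stmt11 {X : Type*} [MetricSpace X] [ProperSpace X] [MeasurableSpace X] [BorelSpace X]
    (p : ℝ) (hp : 1 ≤ p) (μ : Measure X) [IsProbabilityMeasure μ] (hμ : FinMom p μ)
    (k : ℕ) (R : Set X) (hRc : IsClosed R)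
    (hk : (k : ℕ∞) ≤ (R ∩ measSupp μ).encard) :
    ∀ j : ℕ, 1 ≤ j → j < k → mCost p μ (j + 1) R < mCost p μ j R := by
  intro j hj1 hjk
  classical
  have hp0 : (0 : ℝ) < p := by linarith
  -- extract j+1 points of R ∩ supp μ
  obtain ⟨F, hFsub, hFcard⟩ := Set.exists_subset_encard_eq
    (k := ((j + 1 : ℕ) : ℕ∞))
    (le_trans (by exact_mod_cast Nat.succ_le_of_lt hjk) hk)
  have hFfin : F.Finite := Set.finite_of_encard_eq_coe hFcard
  have hFncard : F.ncard = j + 1 := by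
    rw [Set.ncard_def, hFcard]; rfl
  have hFne : F.Nonempty := by
    rw [← Set.ncard_pos hFfin, hFncard]; omega
  -- minimal pairwise distance r > 0
  obtain ⟨r, hr, hrF⟩ : ∃ r > 0, ∀ a ∈ F, ∀ b ∈ F, a ≠ b → r ≤ dist a b := by
    obtain ⟨r, hr, hrT⟩ := finite_pos_lb (T := (fun q : X × X => dist q.1 q.2) ''
      ((F ×ˢ F) ∩ {q | q.1 ≠ q.2}))
      (((hFfin.prod hFfin).inter_of_left _).image _)
      (by rintro t ⟨⟨a, b⟩, ⟨⟨haF, hbF⟩, hab⟩, rfl⟩; exact dist_pos.2 hab)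
    exact ⟨r, hr, fun a ha b hb hab => hrT _ ⟨(a, b), ⟨⟨ha, hb⟩, hab⟩, rfl⟩⟩
  -- gain constant
  set c : ℝ := (r / 3) ^ p - (r / 6) ^ p with hc_def
  have hc : 0 < c := by
    rw [hc_def]
    exact sub_pos.2 (Real.rpow_lt_rpow (x := r / 6) (y := r / 3) (by linarith) (by linarith) hp0)
  -- uniform lower bound on the masses of small balls around points of F
  obtain ⟨m, hm, hmF⟩ : ∃ m > 0, ∀ x ∈ F, m ≤ (μ (ball x (r / 6))).toReal := by
    have hpos : ∀ t ∈ (fun x => (μ (ball x (r / 6))).toReal) '' F, 0 < t := by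
      rintro t ⟨x, hx, rfl⟩
      have hxsupp : x ∈ measSupp μ := (hFsub hx).2
      exact ENNReal.toReal_pos (hxsupp _ (by linarith)) (measure_ne_top μ _)
    obtain ⟨m, hm, hmT⟩ := finite_pos_lb (hFfin.image _) hpos
    exact ⟨m, hm, fun x hx => hmT _ ⟨x, hx, rfl⟩⟩
  set δ : ℝ := c * m with hδ_def
  have hδ : 0 < δ := mul_pos hc hm
  -- basic facts about feasible sets and costs
  have hWp_nonneg : ∀ S : Set X, 0 ≤ Wp p S μ := fun S =>
    integral_nonneg (fun y => Real.rpow_nonneg infDist_nonneg p)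
  have hbdd : ∀ n : ℕ, BddBelow ((fun S => Wp p S μ) '' {S : Set X | Feas n R S}) := by
    intro n
    exact ⟨0, by rintro w ⟨S, hS, rfl⟩; exact hWp_nonneg S⟩
  obtain ⟨x0, hx0F⟩ := hFne
  have hx0R : x0 ∈ R := (hFsub hx0F).1
  have hne : ∀ n : ℕ, 1 ≤ n → ((fun S => Wp p S μ) '' {S : Set X | Feas n R S}).Nonempty := by
    intro n hn
    exact ⟨Wp p {x0} μ, ⟨{x0}, ⟨Set.singleton_subset_iff.2 hx0R, Set.finite_singleton _,
      Set.singleton_nonempty _, by simp [Set.ncard_singleton]; omega⟩, rfl⟩⟩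
  -- key step: adding a suitable point of F decreases the cost by δ
  have key : ∀ S : Set X, Feas j R S → mCost p μ (j + 1) R + δ ≤ Wp p S μ := by
    intro S hS
    obtain ⟨hSR, hSfin, hSne, hScard⟩ := hS
    -- pigeonhole: some x ∈ F has no point of S within r/2
    obtain ⟨x, hxF, hxS⟩ : ∃ x ∈ F, ∀ s ∈ S, r / 2 ≤ dist x s := by
      by_contra hcon
      push_neg at hcon
      set f : X → X := fun x => if hx : ∃ s ∈ S, dist x s < r / 2 then hx.choose else x with hf
      have hfS : ∀ x ∈ F, f x ∈ S ∧ dist x (f x) < r / 2 := by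
        intro x hx
        obtain ⟨s, hs, hds⟩ := hcon x hx
        have hex : ∃ s ∈ S, dist x s < r / 2 := ⟨s, hs, hds⟩
        simp only [hf, dif_pos hex]
        exact ⟨hex.choose_spec.1, hex.choose_spec.2⟩
      have hinj : Set.InjOn f F := by
        intro a ha b hb hab
        by_contra hne'
        have h1 := (hfS a ha).2
        have h2 := (hfS b hb).2
        rw [hab] at h1
        have : dist a b < r := by
          calc dist a b ≤ dist a (f b) + dist (f b) b := dist_triangle _ _ _
            _ = dist a (f b) + dist b (f b) := by rw [dist_comm (f b) b]
            _ < r / 2 + r / 2 := by linarith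
            _ = r := by ring
        exact absurd (hrF a ha b hb hne') (by linarith)
      have : j + 1 ≤ j := by
        calc j + 1 = F.ncard := hFncard.symm
          _ = (f '' F).ncard := (Set.ncard_image_of_injOn hinj).symm
          _ ≤ S.ncard := Set.ncard_le_ncard (by
              rintro _ ⟨a, ha, rfl⟩; exact (hfS a ha).1) hSfin
          _ ≤ j := hScard
      omega
    -- the improved set
    have hxR : x ∈ R := (hFsub hxF).1
    have hfeas' : Feas (j + 1) R (insert x S) :=
      ⟨Set.insert_subset hxR hSR, hSfin.insert x, Set.insert_nonempty x S,
        (Set.ncard_insert_le x S).trans (by omega)⟩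
    -- integrability
    have hIS : Integrable (fun y => infDist y S ^ p) μ := integrable_infDist_rpow hp hμ hSne
    have hIxS : Integrable (fun y => infDist y (insert x S) ^ p) μ :=
      integrable_infDist_rpow hp hμ (Set.insert_nonempty x S)
    -- pointwise comparison
    have hgain : ∀ y, (ball x (r / 6)).indicator (fun _ => c) y ≤
        infDist y S ^ p - infDist y (insert x S) ^ p := by
      intro y
      have hmono : infDist y (insert x S) ≤ infDist y S :=
        infDist_le_infDist_of_subset (Set.subset_insert x S) hSne
      by_cases hy : y ∈ ball x (r / 6)
      · rw [Set.indicator_of_mem hy]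
        have hyx : dist y x < r / 6 := mem_ball.1 hy
        have h1 : infDist y (insert x S) ^ p ≤ (r / 6) ^ p := by
          apply Real.rpow_le_rpow infDist_nonneg ?_ hp0.le
          exact le_trans (infDist_le_dist_of_mem (Set.mem_insert x S)) hyx.le
        have h2 : (r / 3) ^ p ≤ infDist y S ^ p := by
          apply Real.rpow_le_rpow (by linarith) ?_ hp0.le
          by_contra hlt
          push_neg at hlt
          obtain ⟨s, hsS, hds⟩ := (infDist_lt_iff hSne).1 hlt
          have : r / 2 ≤ dist x s := hxS s hsS
          have : dist x s ≤ dist x y + dist y s := dist_triangle _ _ _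
          rw [dist_comm x y] at this
          linarith
        rw [hc_def]; linarith
      · rw [Set.indicator_of_notMem hy]
        have : infDist y (insert x S) ^ p ≤ infDist y S ^ p :=
          Real.rpow_le_rpow infDist_nonneg hmono hp0.le
        linarith
    -- integral comparison
    have hball : MeasurableSet (ball x (r / 6)) := measurableSet_ball
    have hint_ind : ∫ y, (ball x (r / 6)).indicator (fun _ => c) y ∂μ =
        (μ (ball x (r / 6))).toReal * c := by
      rw [MeasureTheory.integral_indicator_const c hball, smul_eq_mul, measureReal_def]
    have hIind : Integrable ((ball x (r / 6)).indicator (fun _ => c)) μ :=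
      (integrable_const c).indicator hball
    have hle : (μ (ball x (r / 6))).toReal * c ≤ Wp p S μ - Wp p (insert x S) μ := by
      rw [← hint_ind, Wp, Wp, ← MeasureTheory.integral_sub hIS hIxS]
      exact MeasureTheory.integral_mono hIind (hIS.sub hIxS) hgain
    have hδle : δ ≤ (μ (ball x (r / 6))).toReal * c := by
      rw [hδ_def, mul_comm]
      exact mul_le_mul_of_nonneg_right (hmF x hxF) hc.le
    have hmem : Wp p (insert x S) μ ∈ (fun S => Wp p S μ) '' {S : Set X | Feas (j + 1) R S} :=
      ⟨insert x S, hfeas', rfl⟩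
    have hmc : mCost p μ (j + 1) R ≤ Wp p (insert x S) μ := csInf_le (hbdd _) hmem
    linarith
  have hfinal : mCost p μ (j + 1) R + δ ≤ mCost p μ j R := by
    apply le_csInf (hne j hj1)
    rintro w ⟨S, hS, rfl⟩
    exact key S hS
  linarith
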